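/- Let Φ : (M₁,Ω₁) → (M₂,Ω₂) be a state-preserving Markov map with adjoint, Ĵ an anti-unitary on L_{Φ^♯} with Ĵ V_{Φ^♯} = V_{Φ^♯} J₁, and let R be the von Neumann algebra generated by σ_{Φ^♯}(M₂) and Ĵ*τ_{Φ^♯}(M₁')Ĵ. If V_{Φ^♯}* R V_{Φ^♯} ⊆ M₁ and Λ_{Φ^♯}* R Λ_{Φ^♯} ⊆ M₂, then the vector Ω_{Φ^♯} = [1⊗Ω₁] is separating for R (and cyclic), so (R, Ω_{Φ^♯}) is in standard form, and Φ is factorizable: Φ = σ_{Φ^♯}^♯ ∘ β with β(A₁) = Ĵ*τ_{Φ^♯}(J₁A₁J₁)Ĵ. -/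
import Mathlib


open scoped InnerProductSpace ComplexOrder
open ContinuousLinearMap (adjoint)

noncomputable section

/-- Complete positivity of a map `Φ` relative to a subset `M` of operators: matrix
amplifications preserve positivity, expressed on vectors. -/
def IsCP {H K : Type*} [NormedAddCommGroup H] [InnerProductSpace ℂ H]
    [NormedAddCommGroup K] [InnerProductSpace ℂ K]
    (M : Set (H →L[ℂ] H)) (Φ : (H →L[ℂ] H) →ₗ[ℂ] (K →L[ℂ] K)) : Prop :=
  ∀ (n : ℕ) (B : Fin n → Fin n → (H →L[ℂ] H)),
    (∀ i j, B i j ∈ M) →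
    (∀ v : Fin n → H, 0 ≤ ∑ i, ∑ j, ⟪v i, (B i j) (v j)⟫_ℂ) →
    ∀ w : Fin n → K, 0 ≤ ∑ i, ∑ j, ⟪w i, (Φ (B i j)) (w j)⟫_ℂ

/-- The Stinespring space `L_Φ` of a (completely positive) map `Φ`, defined on the
subset `M` of `B(H)` and taking values in `B(K)`: the separation-completion of the
algebraic tensor product `M ⊗ K` with respect to the semi-inner product
`⟨A ⊗ h, X ⊗ k⟩ = ⟨h, Φ(A* X) k⟩`, presented abstractly as a Hilbert space `L`
together with the bilinear map `emb A h = [A ⊗ h]` having dense span. -/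
structure StinespringData {H K : Type*}
    [NormedAddCommGroup H] [InnerProductSpace ℂ H] [CompleteSpace H]
    [NormedAddCommGroup K] [InnerProductSpace ℂ K] [CompleteSpace K]
    (M : Set (H →L[ℂ] H)) (Φ : (H →L[ℂ] H) →ₗ[ℂ] (K →L[ℂ] K))
    (L : Type*) [NormedAddCommGroup L] [InnerProductSpace ℂ L] [CompleteSpace L] where
  emb : (H →L[ℂ] H) →ₗ[ℂ] K →ₗ[ℂ] L
  inner_emb : ∀ A X : H →L[ℂ] H, A ∈ M → X ∈ M → ∀ h k : K,
    ⟪emb A h, emb X k⟫_ℂ = ⟪h, Φ (star A * X) k⟫_ℂ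
  dense_span :
    (Submodule.span ℂ {x : L | ∃ A ∈ M, ∃ h : K, x = emb A h}).topologicalClosure = ⊤
/-- `Ω` is a cyclic vector for the set of operators `M`. -/
def IsCyclicVec {H : Type*} [NormedAddCommGroup H] [InnerProductSpace ℂ H]
    (M : Set (H →L[ℂ] H)) (Ω : H) : Prop :=
  (Submodule.span ℂ {x : H | ∃ A ∈ M, x = A Ω}).topologicalClosure = ⊤

/-- `Ω` is a separating vector for the set of operators `M`. -/
def IsSeparatingVec {H : Type*} [NormedAddCommGroup H] [InnerProductSpace ℂ H]
    (M : Set (H →L[ℂ] H)) (Ω : H) : Prop :=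
  ∀ A ∈ M, A Ω = 0 → A = 0

/-- `Φ` preserves the vector states given by `Ω₁`, `Ω₂` on the algebra `M`. -/
def IsStatePreserving {H K : Type*} [NormedAddCommGroup H] [InnerProductSpace ℂ H]
    [NormedAddCommGroup K] [InnerProductSpace ℂ K]
    (M : Set (H →L[ℂ] H)) (Ω₁ : H) (Ω₂ : K)
    (Φ : (H →L[ℂ] H) →ₗ[ℂ] (K →L[ℂ] K)) : Prop :=
  ∀ A ∈ M, ⟪Ω₂, Φ A Ω₂⟫_ℂ = ⟪Ω₁, A Ω₁⟫_ℂ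
/-- The modular conjugation of a von Neumann algebra `M` in standard form with cyclic and
separating vector `Ω`: an anti-unitary involution `J` fixing `Ω`, together with the induced
conjugation `conj A = J A J` on operators, which exchanges `M` with its commutant `M'` and
acts as the identity on the natural positive cone. -/
structure ModularConjugation {H : Type*}
    [NormedAddCommGroup H] [InnerProductSpace ℂ H] [CompleteSpace H]
    (M : VonNeumannAlgebra H) (Ω : H) where
  J : H → H
  conj : (H →L[ℂ] H) → (H →L[ℂ] H)
  map_add : ∀ x y, J (x + y) = J x + J y
  map_smul : ∀ (a : ℂ) (x : H), J (a • x) = (starRingEnd ℂ a) • J x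
  invol : ∀ x, J (J x) = x
  inner_map : ∀ x y, ⟪J x, J y⟫_ℂ = ⟪y, x⟫_ℂ
  fixΩ : J Ω = Ω
  conj_apply : ∀ (A : H →L[ℂ] H) (x : H), conj A x = J (A (J x))
  conj_mem : ∀ A ∈ M, conj A ∈ M.commutant
  conj_mem' : ∀ Y ∈ M.commutant, conj Y ∈ M
  fix_cone : ∀ A ∈ M, J ((A * conj A) Ω) = (A * conj A) Ω

/-- The von Neumann algebra (as a set of operators) generated by a self-adjoint set `S`
of bounded operators: the double commutant of `S`. -/
def doubleCommutant {K : Type*} [NormedAddCommGroup K] [InnerProductSpace ℂ K]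
    (S : Set (K →L[ℂ] K)) : Set (K →L[ℂ] K) :=
  Set.centralizer (Set.centralizer S)


section Aux
variable {L : Type*} [NormedAddCommGroup L] [InnerProductSpace ℂ L]

lemma aux_dense {s : Set L} (hs : (Submodule.span ℂ s).topologicalClosure = ⊤) :
    Dense (Submodule.span ℂ s : Set L) :=
  Submodule.dense_iff_topologicalClosure_eq_top.mpr hs

lemma aux_inner_zero {s : Set L} (hs : (Submodule.span ℂ s).topologicalClosure = ⊤)
    {v : L} (h : ∀ x ∈ s, ⟪v, x⟫_ℂ = 0) : v = 0 := by
  have hspan : ∀ x ∈ Submodule.span ℂ s, ⟪v, x⟫_ℂ = 0 := by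
    intro x hx
    induction hx using Submodule.span_induction with
    | mem x hx => exact h x hx
    | zero => simp
    | add x y hx hy ihx ihy => rw [inner_add_right, ihx, ihy, add_zero]
    | smul a x hx ihx => rw [inner_smul_right, ihx, mul_zero]
  have hc : Continuous fun x : L => ⟪v, x⟫_ℂ := continuous_const.inner continuous_id
  have hall := Continuous.ext_on (aux_dense hs) hc continuous_const
    (fun x hx => hspan x hx)
  have := congrFun hall v
  simpa using this

lemma aux_inner_zero_right {s : Set L} (hs : (Submodule.span ℂ s).topologicalClosure = ⊤)
    {v : L} (h : ∀ x ∈ s, ⟪x, v⟫_ℂ = 0) : v = 0 :=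
  aux_inner_zero hs fun x hx => by
    rw [← inner_conj_symm, h x hx, map_zero]

lemma aux_clm_ext {L' : Type*} [NormedAddCommGroup L'] [InnerProductSpace ℂ L']
    {s : Set L} (hs : (Submodule.span ℂ s).topologicalClosure = ⊤)
    {f g : L →L[ℂ] L'} (h : ∀ x ∈ s, f x = g x) : f = g := by
  have hspan : ∀ x ∈ Submodule.span ℂ s, f x = g x := by
    intro x hx
    induction hx using Submodule.span_induction with
    | mem x hx => exact h x hx
    | zero => simp
    | add x y hx hy ihx ihy => simp [map_add, ihx, ihy]
    | smul a x hx ihx => simp [map_smul, ihx]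
  exact ContinuousLinearMap.ext fun x =>
    congrFun (Continuous.ext_on (aux_dense hs) f.continuous g.continuous hspan) x

lemma aux_clm_ext_inner
    {s : Set L} (hs : (Submodule.span ℂ s).topologicalClosure = ⊤)
    {f g : L →L[ℂ] L}
    (h : ∀ a ∈ s, ∀ b ∈ s, ⟪f a, b⟫_ℂ = ⟪g a, b⟫_ℂ) : f = g := by
  refine aux_clm_ext hs fun a ha => ?_
  have : f a - g a = 0 := aux_inner_zero hs fun b hb => by
    rw [inner_sub_left, h a ha b hb, sub_self]
  exact sub_eq_zero.mp this

end Aux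

lemma compress_kill {K L : Type*} [NormedAddCommGroup K] [InnerProductSpace ℂ K]
    [CompleteSpace K] [NormedAddCommGroup L] [InnerProductSpace ℂ L] [CompleteSpace L]
    {M : Set (K →L[ℂ] K)} {Ω : K} (hsep : IsSeparatingVec M Ω)
    (W : K →L[ℂ] L) (T : L →L[ℂ] L)
    (hmem : adjoint W ∘L (adjoint T ∘L T) ∘L W ∈ M)
    (hΩ : T (W Ω) = 0) (k : K) : T (W k) = 0 := by
  set P := adjoint W ∘L (adjoint T ∘L T) ∘L W with hP
  have hPx : ∀ x y : K, ⟪x, P y⟫_ℂ = ⟪T (W x), T (W y)⟫_ℂ := by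
    intro x y
    simp only [hP, ContinuousLinearMap.comp_apply,
      ContinuousLinearMap.adjoint_inner_right]
  have hPΩ : P Ω = 0 := by
    have h0 : ⟪P Ω, P Ω⟫_ℂ = 0 := by rw [hPx, hΩ, inner_zero_right]
    exact inner_self_eq_zero.mp h0
  have hP0 : P = 0 := hsep P hmem hPΩ
  have h0 : ⟪T (W k), T (W k)⟫_ℂ = 0 := by
    rw [← hPx, hP0]; simp
  exact inner_self_eq_zero.mp h0

/-- Let `Ĵ` be an anti-unitary on `L_{Φ^♯}` with `Ĵ V_{Φ^♯} = V_{Φ^♯} J₁`,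
and let `R` be the von Neumann algebra generated by `σ_{Φ^♯}(M₂)` and `Ĵ* τ_{Φ^♯}(M₁') Ĵ`.
If `V_{Φ^♯}* R V_{Φ^♯} ⊆ M₁` and `Λ_{Φ^♯}* R Λ_{Φ^♯} ⊆ M₂`, then `Ω_{Φ^♯} = [1 ⊗ Ω₁]`
is cyclic and separating for `R` (so `(R, Ω_{Φ^♯})` is standard), and `Φ` is factorizable:
`Φ = σ_{Φ^♯}^♯ ∘ β` with `β(A₁) = Ĵ* τ_{Φ^♯}(J₁ A₁ J₁) Ĵ`, both `σ_{Φ^♯}` and `β` being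
state-preserving *-homomorphisms into `R`. -/
theorem stmt18
    {H₁ H₂ : Type*} [NormedAddCommGroup H₁] [InnerProductSpace ℂ H₁] [CompleteSpace H₁]
    [NormedAddCommGroup H₂] [InnerProductSpace ℂ H₂] [CompleteSpace H₂]
    (M₁ : VonNeumannAlgebra H₁) (M₂ : VonNeumannAlgebra H₂) (Ω₁ : H₁) (Ω₂ : H₂)
    (hΩ₁ : ‖Ω₁‖ = 1) (hΩ₂ : ‖Ω₂‖ = 1)
    (hcyc₁ : IsCyclicVec (M₁ : Set (H₁ →L[ℂ] H₁)) Ω₁)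
    (hsep₁ : IsSeparatingVec (M₁ : Set (H₁ →L[ℂ] H₁)) Ω₁)
    (hcyc₂ : IsCyclicVec (M₂ : Set (H₂ →L[ℂ] H₂)) Ω₂)
    (hsep₂ : IsSeparatingVec (M₂ : Set (H₂ →L[ℂ] H₂)) Ω₂)
    (J₁ : ModularConjugation M₁ Ω₁) (J₂ : ModularConjugation M₂ Ω₂)
    (Φ : (H₁ →L[ℂ] H₁) →ₗ[ℂ] (H₂ →L[ℂ] H₂))
    (hmem : ∀ A ∈ M₁, Φ A ∈ M₂) (hunital : Φ 1 = 1)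
    (hCP : IsCP (M₁ : Set (H₁ →L[ℂ] H₁)) Φ)
    (hstate : IsStatePreserving (M₁ : Set (H₁ →L[ℂ] H₁)) Ω₁ Ω₂ Φ)
    (Φs : (H₂ →L[ℂ] H₂) →ₗ[ℂ] (H₁ →L[ℂ] H₁))
    (hmems : ∀ B ∈ M₂, Φs B ∈ M₁) (hunitals : Φs 1 = 1)
    (hCPs : IsCP (M₂ : Set (H₂ →L[ℂ] H₂)) Φs)
    (hstates : IsStatePreserving (M₂ : Set (H₂ →L[ℂ] H₂)) Ω₂ Ω₁ Φs)
    (hadj : ∀ A ∈ M₁, ∀ B ∈ M₂, ⟪Ω₂, B (Φ A Ω₂)⟫_ℂ = ⟪Ω₁, Φs B (A Ω₁)⟫_ℂ)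
    -- Stinespring data (L_{Φ^♯}, σ_{Φ^♯}, τ_{Φ^♯}, V_{Φ^♯}, Λ_{Φ^♯}) of Φ^♯
    (Ls : Type*) [NormedAddCommGroup Ls] [InnerProductSpace ℂ Ls] [CompleteSpace Ls]
    (Ss : StinespringData (M₂ : Set (H₂ →L[ℂ] H₂)) Φs Ls)
    (σ : (H₂ →L[ℂ] H₂) → (Ls →L[ℂ] Ls))
    (hσ : ∀ A ∈ M₂, ∀ X ∈ M₂, ∀ h : H₁, σ A (Ss.emb X h) = Ss.emb (A * X) h)
    (τ : (H₁ →L[ℂ] H₁) → (Ls →L[ℂ] Ls))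
    (hτ : ∀ Y ∈ M₁.commutant, ∀ X ∈ M₂, ∀ h : H₁, τ Y (Ss.emb X h) = Ss.emb X (Y h))
    (V : H₁ →L[ℂ] Ls) (hV : ∀ h : H₁, V h = Ss.emb 1 h)
    (Λ : H₂ →L[ℂ] Ls) (hΛ : ∀ B ∈ M₂, Λ (B Ω₂) = Ss.emb B Ω₁)
    -- the anti-unitary Ĵ on L_{Φ^♯}, with inverse Ĵ* = Jh'
    (Jh Jh' : Ls → Ls)
    (hJh_add : ∀ x y, Jh (x + y) = Jh x + Jh y)
    (hJh_smul : ∀ (c : ℂ) (x : Ls), Jh (c • x) = (starRingEnd ℂ c) • Jh x)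
    (hJh_inner : ∀ x y, ⟪Jh x, Jh y⟫_ℂ = ⟪y, x⟫_ℂ)
    (hJh_inv : ∀ x, Jh' (Jh x) = x) (hJh_inv' : ∀ x, Jh (Jh' x) = x)
    (hJV : ∀ x : H₁, Jh (V x) = V (J₁.J x))
    -- γ Y = Ĵ* τ_{Φ^♯}(Y) Ĵ for Y ∈ M₁', so that β(A₁) = γ (J₁ A₁ J₁)
    (γ : (H₁ →L[ℂ] H₁) → (Ls →L[ℂ] Ls))
    (hγ : ∀ Y ∈ M₁.commutant, ∀ x : Ls, γ Y x = Jh' (τ Y (Jh x)))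
    -- compressions of R = σ_{Φ^♯}(M₂) ∨ Ĵ* τ_{Φ^♯}(M₁') Ĵ land in M₁ resp. M₂
    (hRV : ∀ T ∈ doubleCommutant
        ({T | ∃ A ∈ M₂, T = σ A} ∪ {T | ∃ Y ∈ M₁.commutant, T = γ Y}),
      adjoint V ∘L T ∘L V ∈ M₁)
    (hRΛ : ∀ T ∈ doubleCommutant
        ({T | ∃ A ∈ M₂, T = σ A} ∪ {T | ∃ Y ∈ M₁.commutant, T = γ Y}),
      adjoint Λ ∘L T ∘L Λ ∈ M₂) :
    -- Ω_{Φ^♯} is separating for R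
    (∀ T ∈ doubleCommutant
        ({T | ∃ A ∈ M₂, T = σ A} ∪ {T | ∃ Y ∈ M₁.commutant, T = γ Y}),
      T (Ss.emb 1 Ω₁) = 0 → T = 0) ∧
    -- Ω_{Φ^♯} is cyclic for R
    (Submodule.span ℂ {x : Ls | ∃ T ∈ doubleCommutant
        ({T | ∃ A ∈ M₂, T = σ A} ∪ {T | ∃ Y ∈ M₁.commutant, T = γ Y}),
      x = T (Ss.emb 1 Ω₁)}).topologicalClosure = ⊤ ∧
    -- α = σ_{Φ^♯} and β(A₁) = γ(J₁ A₁ J₁) map into R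
    (∀ A ∈ M₂, σ A ∈ doubleCommutant
        ({T | ∃ A ∈ M₂, T = σ A} ∪ {T | ∃ Y ∈ M₁.commutant, T = γ Y})) ∧
    (∀ A ∈ M₁, γ (J₁.conj A) ∈ doubleCommutant
        ({T | ∃ A ∈ M₂, T = σ A} ∪ {T | ∃ Y ∈ M₁.commutant, T = γ Y})) ∧
    -- β is a state-preserving *-homomorphism
    (∀ A ∈ M₁, ∀ B ∈ M₁, γ (J₁.conj (A * B)) = γ (J₁.conj A) * γ (J₁.conj B)) ∧
    (∀ A ∈ M₁, γ (J₁.conj (star A)) = adjoint (γ (J₁.conj A))) ∧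
    (∀ A ∈ M₁, ⟪Ss.emb 1 Ω₁, γ (J₁.conj A) (Ss.emb 1 Ω₁)⟫_ℂ = ⟪Ω₁, A Ω₁⟫_ℂ) ∧
    -- factorization: Φ = σ_{Φ^♯}^♯ ∘ β, σ_{Φ^♯}^♯(T) = Λ* T Λ
    (∀ A ∈ M₁, Φ A = adjoint Λ ∘L γ (J₁.conj A) ∘L Λ) := by
    classical
  -- basic memberships
  have h1₂ : (1 : H₂ →L[ℂ] H₂) ∈ M₂ := one_mem M₂
  -- commutant elements commute with M₁ pointwise
  have hccomm : ∀ Y ∈ M₁.commutant, ∀ m ∈ M₁, ∀ v : H₁, Y (m v) = m (Y v) := by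
    intro Y hY m hm v
    have h := (VonNeumannAlgebra.mem_commutant_iff.mp hY) m hm
    have h2 := ContinuousLinearMap.ext_iff.mp h v
    simpa [ContinuousLinearMap.mul_apply] using h2.symm
  -- basic vector identities
  have hJV' : ∀ k : H₁, Jh' (V k) = V (J₁.J k) := by
    intro k
    have h1 : Jh (V (J₁.J k)) = V k := by rw [hJV, J₁.invol]
    rw [← h1, hJh_inv]
  have hVΩ : V Ω₁ = Ss.emb 1 Ω₁ := hV Ω₁
  have hΛΩ : Λ Ω₂ = Ss.emb 1 Ω₁ := by
    have h := hΛ 1 h1₂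
    simpa using h
  have hJhΩ : Jh (Ss.emb 1 Ω₁) = Ss.emb 1 Ω₁ := by
    rw [← hVΩ, hJV, J₁.fixΩ]
  have hσV : ∀ A ∈ M₂, ∀ h : H₁, σ A (V h) = Ss.emb A h := by
    intro A hA h
    rw [hV, hσ A hA 1 h1₂ h, mul_one]
  have hγΩ : ∀ Y ∈ M₁.commutant, γ Y (Ss.emb 1 Ω₁) = V (J₁.J (Y Ω₁)) := by
    intro Y hY
    rw [hγ Y hY, hJhΩ, hτ Y hY 1 h1₂ Ω₁, ← hV, hJV']
  have hγconjΩ : ∀ A ∈ M₁, γ (J₁.conj A) (Ss.emb 1 Ω₁) = V (A Ω₁) := by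
    intro A hA
    rw [hγΩ _ (J₁.conj_mem A hA)]
    congr 1
    rw [J₁.conj_apply, J₁.fixΩ, J₁.invol]
  -- operator identities for τ
  have hτmul : ∀ Y ∈ M₁.commutant, ∀ Y' ∈ M₁.commutant,
      τ (Y * Y') = τ Y ∘L τ Y' := by
    intro Y hY Y' hY'
    refine aux_clm_ext Ss.dense_span ?_
    rintro x ⟨X, hX, h, rfl⟩
    rw [ContinuousLinearMap.comp_apply, hτ Y' hY' X hX, hτ Y hY X hX,
        hτ (Y * Y') (mul_mem hY hY') X hX, ContinuousLinearMap.mul_apply]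
  have hadjσ : ∀ A ∈ M₂, σ (star A) = adjoint (σ A) := by
    intro A hA
    refine aux_clm_ext_inner Ss.dense_span ?_
    rintro a ⟨X, hX, h, rfl⟩ b ⟨X', hX', h', rfl⟩
    rw [ContinuousLinearMap.adjoint_inner_left, hσ (star A) (star_mem hA) X hX,
        hσ A hA X' hX',
        Ss.inner_emb _ _ (mul_mem (star_mem hA) hX) hX' h h',
        Ss.inner_emb _ _ hX (mul_mem hA hX') h h']
    have harg : star (star A * X) * X' = star X * (A * X') := by
      rw [star_mul, star_star, mul_assoc]
    rw [harg]
  have hadjτ : ∀ Y ∈ M₁.commutant, τ (star Y) = adjoint (τ Y) := by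
    intro Y hY
    refine aux_clm_ext_inner Ss.dense_span ?_
    rintro a ⟨X, hX, h, rfl⟩ b ⟨X', hX', h', rfl⟩
    rw [ContinuousLinearMap.adjoint_inner_left, hτ (star Y) (star_mem hY) X hX,
        hτ Y hY X' hX',
        Ss.inner_emb _ _ hX hX' (star Y h) h',
        Ss.inner_emb _ _ hX hX' h (Y h')]
    rw [ContinuousLinearMap.star_eq_adjoint, ContinuousLinearMap.adjoint_inner_left]
    congr 1
    exact hccomm Y hY _ (hmems _ (mul_mem (star_mem hX) hX')) h'
  -- γ is multiplicative and star-preserving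
  have hγmul : ∀ Y ∈ M₁.commutant, ∀ Y' ∈ M₁.commutant,
      γ (Y * Y') = γ Y * γ Y' := by
    intro Y hY Y' hY'
    refine ContinuousLinearMap.ext fun x => ?_
    rw [ContinuousLinearMap.mul_apply, hγ Y hY, hγ Y' hY',
        hγ _ (mul_mem hY hY'), hJh_inv', hτmul Y hY Y' hY',
        ContinuousLinearMap.comp_apply]
  have hJh'inner2 : ∀ a b : Ls, ⟪Jh' a, Jh' b⟫_ℂ = ⟪b, a⟫_ℂ := by
    intro a b
    have h := hJh_inner (Jh' b) (Jh' a)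
    rw [hJh_inv', hJh_inv'] at h
    exact h.symm
  have hJh'inner : ∀ a b : Ls, ⟪Jh' a, b⟫_ℂ = ⟪Jh b, a⟫_ℂ := by
    intro a b
    rw [← hJh_inv b, hJh'inner2, hJh_inv]
  have hγstar : ∀ Y ∈ M₁.commutant, γ (star Y) = adjoint (γ Y) := by
    intro Y hY
    rw [ContinuousLinearMap.eq_adjoint_iff]
    intro x y
    rw [hγ (star Y) (star_mem hY), hγ Y hY, hJh'inner,
        hadjτ Y hY, ContinuousLinearMap.adjoint_inner_right]
    rw [← inner_conj_symm x, hJh'inner, inner_conj_symm]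
  -- modular conjugation identities
  have hconjmul : ∀ A B : H₁ →L[ℂ] H₁, J₁.conj (A * B) = J₁.conj A * J₁.conj B := by
    intro A B
    refine ContinuousLinearMap.ext fun x => ?_
    simp only [ContinuousLinearMap.mul_apply, J₁.conj_apply, J₁.invol]
  have hconjstar : ∀ A : H₁ →L[ℂ] H₁, J₁.conj (star A) = adjoint (J₁.conj A) := by
    intro A
    rw [ContinuousLinearMap.eq_adjoint_iff]
    intro x y
    rw [J₁.conj_apply, J₁.conj_apply]
    calc ⟪J₁.J (star A (J₁.J x)), y⟫_ℂ
        = ⟪J₁.J (star A (J₁.J x)), J₁.J (J₁.J y)⟫_ℂ := by rw [J₁.invol]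
      _ = ⟪J₁.J y, star A (J₁.J x)⟫_ℂ := J₁.inner_map _ _
      _ = ⟪A (J₁.J y), J₁.J x⟫_ℂ := by
          rw [ContinuousLinearMap.star_eq_adjoint,
            ContinuousLinearMap.adjoint_inner_right]
      _ = ⟪J₁.J (J₁.J (A (J₁.J y))), J₁.J x⟫_ℂ := by rw [J₁.invol]
      _ = ⟪x, J₁.J (A (J₁.J y))⟫_ℂ := J₁.inner_map _ _
  -- the generating set and its double commutant
  set Sgen : Set (Ls →L[ℂ] Ls) :=
    {T | ∃ A ∈ M₂, T = σ A} ∪ {T | ∃ Y ∈ M₁.commutant, T = γ Y} with hSgen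
  have hsub : Sgen ⊆ doubleCommutant Sgen := by
    unfold doubleCommutant
    exact Set.subset_centralizer_centralizer
  have hσR : ∀ A ∈ M₂, σ A ∈ doubleCommutant Sgen := fun A hA =>
    hsub (Or.inl ⟨A, hA, rfl⟩)
  have hγR : ∀ Y ∈ M₁.commutant, γ Y ∈ doubleCommutant Sgen := fun Y hY =>
    hsub (Or.inr ⟨Y, hY, rfl⟩)
  have hSstar : ∀ T ∈ Sgen, star T ∈ Sgen := by
    rintro T (⟨A, hA, rfl⟩ | ⟨Y, hY, rfl⟩)
    · exact Or.inl ⟨star A, star_mem hA, by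
        rw [ContinuousLinearMap.star_eq_adjoint, hadjσ A hA]⟩
    · exact Or.inr ⟨star Y, star_mem hY, by
        rw [ContinuousLinearMap.star_eq_adjoint, hγstar Y hY]⟩
  have hCstar : ∀ T ∈ Set.centralizer Sgen, star T ∈ Set.centralizer Sgen := by
    intro T hT z hz
    have h2 := hT (star z) (hSstar z hz)
    have h3 := congrArg star h2
    simpa [star_mul] using h3.symm
  have hRstar : ∀ T ∈ doubleCommutant Sgen, star T ∈ doubleCommutant Sgen := by
    intro T hT z hz
    have h2 := hT (star z) (hCstar z hz)
    have h3 := congrArg star h2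
    simpa [star_mul] using h3.symm
  have hRmul : ∀ T ∈ doubleCommutant Sgen, ∀ T' ∈ doubleCommutant Sgen,
      T * T' ∈ doubleCommutant Sgen := by
    intro T hT T' hT'
    exact Set.mul_mem_centralizer hT hT'
  -- separating
  have hsepΩ : ∀ T ∈ doubleCommutant Sgen, T (Ss.emb 1 Ω₁) = 0 → T = 0 := by
    intro T hT hTΩ
    have hTT : adjoint T ∘L T ∈ doubleCommutant Sgen := by
      have h := hRmul _ (hRstar T hT) _ hT
      rwa [ContinuousLinearMap.star_eq_adjoint, ContinuousLinearMap.mul_def] at h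
    have step1 : ∀ k, T (Λ k) = 0 :=
      compress_kill hsep₂ Λ T (hRΛ _ hTT) (by rw [hΛΩ]; exact hTΩ)
    have step2 : ∀ X ∈ M₂, ∀ h : H₁, T (σ X (V h)) = 0 := by
      intro X hX h
      have hTσ : T ∘L σ X ∈ doubleCommutant Sgen := by
        have h2 := hRmul _ hT _ (hσR X hX)
        rwa [ContinuousLinearMap.mul_def] at h2
      have hcomp : adjoint (T ∘L σ X) ∘L (T ∘L σ X) ∈ doubleCommutant Sgen := by
        have h2 := hRmul _ (hRstar _ hTσ) _ hTσ
        rwa [ContinuousLinearMap.star_eq_adjoint, ContinuousLinearMap.mul_def] at h2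
      have hΩ0 : (T ∘L σ X) (V Ω₁) = 0 := by
        rw [ContinuousLinearMap.comp_apply, hVΩ, hσ X hX 1 h1₂ Ω₁, mul_one,
            ← hΛ X hX]
        exact step1 _
      have h3 := compress_kill hsep₁ V (T ∘L σ X) (hRV _ hcomp) hΩ0 h
      simpa using h3
    refine aux_clm_ext Ss.dense_span ?_
    rintro x ⟨X, hX, h, rfl⟩
    rw [← hσV X hX h]
    simp [step2 X hX h]
  -- cyclic
  have hcyclic : (Submodule.span ℂ {x : Ls | ∃ T ∈ doubleCommutant Sgen,
      x = T (Ss.emb 1 Ω₁)}).topologicalClosure = ⊤ := by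
    set N := (Submodule.span ℂ {x : Ls | ∃ T ∈ doubleCommutant Sgen,
      x = T (Ss.emb 1 Ω₁)}).topologicalClosure with hN
    have hNclosed : IsClosed (N : Set Ls) := Submodule.isClosed_topologicalClosure _
    have hgen : ∀ X ∈ M₂, ∀ A ∈ M₁, Ss.emb X (A Ω₁) ∈ N := by
      intro X hX A hA
      have hmemT : σ X ∘L γ (J₁.conj A) ∈ doubleCommutant Sgen := by
        have h2 := hRmul _ (hσR X hX) _ (hγR _ (J₁.conj_mem A hA))
        rwa [ContinuousLinearMap.mul_def] at h2
      have hval : (σ X ∘L γ (J₁.conj A)) (Ss.emb 1 Ω₁) = Ss.emb X (A Ω₁) := by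
        rw [ContinuousLinearMap.comp_apply, hγconjΩ A hA, hσV X hX]
      have hmemset : Ss.emb X (A Ω₁) ∈ {x : Ls | ∃ T ∈ doubleCommutant Sgen,
          x = T (Ss.emb 1 Ω₁)} := ⟨_, hmemT, hval.symm⟩
      exact Submodule.le_topologicalClosure _ (Submodule.subset_span hmemset)
    have hemb : ∀ X ∈ M₂, ∀ h : H₁, Ss.emb X h ∈ N := by
      intro X hX h
      have hle : Submodule.span ℂ {x : H₁ | ∃ A ∈ (M₁ : Set (H₁ →L[ℂ] H₁)), x = A Ω₁}
          ≤ N.comap ((σ X ∘L V) : H₁ →L[ℂ] Ls).toLinearMap := by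
        rw [Submodule.span_le]
        rintro x ⟨A, hA, rfl⟩
        show (σ X ∘L V) (A Ω₁) ∈ N
        rw [ContinuousLinearMap.comp_apply, hσV X hX]
        exact hgen X hX A hA
      have hclosed : IsClosed
          ((N.comap ((σ X ∘L V) : H₁ →L[ℂ] Ls).toLinearMap : Submodule ℂ H₁) : Set H₁) :=
        hNclosed.preimage (σ X ∘L V).continuous
      have htop := Submodule.topologicalClosure_minimal _ hle hclosed
      rw [hcyc₁] at htop
      have hx : h ∈ N.comap ((σ X ∘L V) : H₁ →L[ℂ] Ls).toLinearMap :=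
        htop Submodule.mem_top
      have hx2 : (σ X ∘L V) h ∈ N := hx
      rwa [ContinuousLinearMap.comp_apply, hσV X hX] at hx2
    have hspan_le : Submodule.span ℂ
        {x : Ls | ∃ A ∈ (M₂ : Set (H₂ →L[ℂ] H₂)), ∃ h : H₁, x = Ss.emb A h} ≤ N := by
      rw [Submodule.span_le]
      rintro x ⟨X, hX, h, rfl⟩
      exact hemb X hX h
    have h2 : (⊤ : Submodule ℂ Ls) ≤ N := by
      rw [← Ss.dense_span]
      exact Submodule.topologicalClosure_minimal _ hspan_le hNclosed
    exact top_unique h2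
  -- state preservation of β
  have hstateβ : ∀ A ∈ M₁,
      ⟪Ss.emb 1 Ω₁, γ (J₁.conj A) (Ss.emb 1 Ω₁)⟫_ℂ = ⟪Ω₁, A Ω₁⟫_ℂ := by
    intro A hA
    rw [hγconjΩ A hA, hV, Ss.inner_emb 1 1 h1₂ h1₂ Ω₁ (A Ω₁), star_one, one_mul,
        hunitals, ContinuousLinearMap.one_apply]
  -- factorization
  have hfact : ∀ A ∈ M₁, Φ A = adjoint Λ ∘L γ (J₁.conj A) ∘L Λ := by
    intro A hA
    have hmem2 : adjoint Λ ∘L γ (J₁.conj A) ∘L Λ ∈ M₂ :=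
      hRΛ _ (hγR _ (J₁.conj_mem A hA))
    have hcyc₂' : (Submodule.span ℂ {x : H₂ | ∃ B ∈ (M₂ : Set (H₂ →L[ℂ] H₂)),
        x = B Ω₂}).topologicalClosure = ⊤ := hcyc₂
    have hD : (Φ A - (adjoint Λ ∘L γ (J₁.conj A) ∘L Λ)) Ω₂ = 0 := by
      refine aux_inner_zero_right hcyc₂' ?_
      rintro x ⟨B, hB, rfl⟩
      rw [ContinuousLinearMap.sub_apply, inner_sub_right]
      have hr : (adjoint Λ ∘L γ (J₁.conj A) ∘L Λ) Ω₂ = adjoint Λ (V (A Ω₁)) := by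
        rw [ContinuousLinearMap.comp_apply, ContinuousLinearMap.comp_apply, hΛΩ,
            hγconjΩ A hA]
      rw [hr]
      have hone : ⟪B Ω₂, adjoint Λ (V (A Ω₁))⟫_ℂ = ⟪Ω₁, Φs (star B) (A Ω₁)⟫_ℂ := by
        rw [ContinuousLinearMap.adjoint_inner_right, hΛ B hB, hV,
            Ss.inner_emb B 1 hB h1₂ Ω₁ (A Ω₁), mul_one]
      have htwo : ⟪B Ω₂, Φ A Ω₂⟫_ℂ = ⟪Ω₁, Φs (star B) (A Ω₁)⟫_ℂ := by
        have hstep : ⟪B Ω₂, Φ A Ω₂⟫_ℂ = ⟪Ω₂, (star B) (Φ A Ω₂)⟫_ℂ := by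
          rw [ContinuousLinearMap.star_eq_adjoint,
            ContinuousLinearMap.adjoint_inner_right]
        rw [hstep, hadj A hA (star B) (star_mem hB)]
      rw [hone, htwo, sub_self]
    have hDmem : Φ A - (adjoint Λ ∘L γ (J₁.conj A) ∘L Λ) ∈ M₂ :=
      sub_mem (hmem A hA) hmem2
    have h0 := hsep₂ _ hDmem hD
    exact sub_eq_zero.mp h0
  refine ⟨hsepΩ, hcyclic, hσR, fun A hA => hγR _ (J₁.conj_mem A hA), ?_, ?_, hstateβ, hfact⟩
  · intro A hA B hB
    rw [hconjmul A B]
    exact hγmul _ (J₁.conj_mem A hA) _ (J₁.conj_mem B hB)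
  · intro A hA
    rw [hconjstar A, ← ContinuousLinearMap.star_eq_adjoint (J₁.conj A),
        hγstar _ (J₁.conj_mem A hA)]
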